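/- For Legendre polynomials and integers n > j-1 ≥ 1, ∫_{-1}^{1} (L_n'(z) + L_{n-1}'(z)) (L_{j-1}(z) - L_{j-2}(z)) dz = 0. -/
import Mathlib
open intervalIntegral MeasureTheory Polynomial

noncomputable def legendre : ℕ → ℝ → ℝ
  | 0 => fun _ => 1
  | 1 => fun z => z
  | (n + 2) => fun z =>
      ((2 * (n : ℝ) + 3) * z * legendre (n + 1) z - ((n : ℝ) + 1) * legendre n z) / ((n : ℝ) + 2)

noncomputable def LP : ℕ → Polynomial ℝ
  | 0 => 1
  | 1 => X
  | (n + 2) => C (((n:ℝ) + 2)⁻¹) *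
      (C (2 * (n:ℝ) + 3) * X * LP (n + 1) - C ((n:ℝ) + 1) * LP n)

lemma legendre_eq : ∀ (n : ℕ) (z : ℝ), legendre n z = (LP n).eval z
  | 0, z => by simp [legendre, LP]
  | 1, z => by simp [legendre, LP]
  | (n+2), z => by
    have h1 := legendre_eq (n+1) z
    have h0 := legendre_eq n z
    simp only [legendre, LP, h1, h0, eval_mul, eval_sub, eval_C, eval_X]
    rw [div_eq_inv_mul]

lemma LP_rec (n : ℕ) : C ((n:ℝ) + 2) * LP (n+2) =
    C (2*(n:ℝ)+3) * X * LP (n+1) - C ((n:ℝ)+1) * LP n := by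
  show C ((n:ℝ)+2) * (C (((n:ℝ)+2)⁻¹) * _) = _
  rw [← mul_assoc, ← C_mul, mul_inv_cancel₀ (by positivity), C_1, one_mul]

lemma bonnet (n : ℕ) :
    derivative (LP (n+1)) = X * derivative (LP n) + C ((n:ℝ)+1) * LP n ∧
    X * derivative (LP (n+1)) - derivative (LP n) = C ((n:ℝ)+1) * LP (n+1) := by
  induction n with
  | zero =>
    constructor
    · simp [LP, show (0+1) = 1 from rfl]
    · simp [LP, show (0+1) = 1 from rfl]
  | succ n ih =>
    obtain ⟨hB, hC2⟩ := ih
    have hCne : (C ((n:ℝ)+2) : Polynomial ℝ) ≠ 0 := by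
      rw [Ne, C_eq_zero]; positivity
    have hd := congrArg derivative (LP_rec n)
    simp only [derivative_mul, derivative_sub, derivative_C, derivative_X, zero_mul,
      mul_one, zero_add, add_zero] at hd
    have hB1 : derivative (LP (n+2)) = X * derivative (LP (n+1)) + C ((n:ℝ)+2) * LP (n+1) := by
      apply mul_left_cancel₀ hCne
      simp only [map_add, map_mul, map_ofNat, map_one] at hd hC2 ⊢
      linear_combination hd + (C (n:ℝ) + 1) * hC2
    have hC1 : X * derivative (LP (n+2)) - derivative (LP (n+1)) = C ((n:ℝ)+2) * LP (n+2) := by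
      have hrec := LP_rec n
      simp only [map_add, map_mul, map_ofNat, map_one] at hrec hB hC2 hB1 ⊢
      linear_combination X * hB1 + X * hC2 - hB - hrec
    constructor
    · convert hB1 using 3
      push_cast; ring
    · convert hC1 using 3 <;> push_cast <;> ring

lemma LP_D (n : ℕ) : (X^2 - 1) * derivative (LP (n+1)) =
    C ((n:ℝ)+1) * (X * LP (n+1) - LP n) := by
  obtain ⟨hB, hC2⟩ := bonnet n
  linear_combination X * hC2 - hB

lemma LP_ode (n : ℕ) : derivative ((X^2 - 1) * derivative (LP n)) =
    C ((n:ℝ)*((n:ℝ)+1)) * LP n := by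
  cases n with
  | zero => simp [LP]
  | succ n =>
    obtain ⟨hB, hC2⟩ := bonnet n
    have hd := congrArg derivative (LP_D n)
    simp only [derivative_mul, derivative_sub, derivative_pow, derivative_C, derivative_X,
      derivative_one, zero_mul, mul_one, add_zero, zero_add, sub_zero] at hd ⊢
    push_cast at hd hC2 ⊢
    simp only [map_add, map_mul, map_one, map_ofNat] at hd hC2 ⊢
    linear_combination hd + (C (n:ℝ) + 1) * hC2

lemma LP_telescope (n : ℕ) : derivative (LP (n+2)) =
    derivative (LP n) + C (2*(n:ℝ)+3) * LP (n+1) := by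
  obtain ⟨hB, _⟩ := bonnet (n+1)
  obtain ⟨_, hC2⟩ := bonnet n
  push_cast at hB
  simp only [map_add, map_mul, map_ofNat, map_one] at hB hC2 ⊢
  linear_combination hB + hC2

lemma LP_eval_one : ∀ n : ℕ, (LP n).eval 1 = 1
  | 0 => by simp [LP]
  | 1 => by simp [LP]
  | (n+2) => by
    have h1 := LP_eval_one (n+1)
    have h0 := LP_eval_one n
    simp only [LP, eval_mul, eval_sub, eval_C, eval_X, h1, h0]
    field_simp
    ring

lemma LP_eval_negone : ∀ n : ℕ, (LP n).eval (-1) = (-1)^n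
  | 0 => by simp [LP]
  | 1 => by simp [LP]
  | (n+2) => by
    have h1 := LP_eval_negone (n+1)
    have h0 := LP_eval_negone n
    simp only [LP, eval_mul, eval_sub, eval_C, eval_X, h1, h0, pow_succ]
    field_simp
    ring

noncomputable def IP (p : Polynomial ℝ) : ℝ := ∫ z in (-1:ℝ)..1, p.eval z

lemma IP_int (p : Polynomial ℝ) : IntervalIntegrable (fun z => p.eval z) volume (-1) 1 :=
  p.continuous.intervalIntegrable (-1) 1

lemma IP_add (p q : Polynomial ℝ) : IP (p + q) = IP p + IP q := by
  unfold IP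
  simp only [eval_add]
  exact integral_add (IP_int p) (IP_int q)

lemma IP_sub (p q : Polynomial ℝ) : IP (p - q) = IP p - IP q := by
  unfold IP
  simp only [eval_sub]
  exact integral_sub (IP_int p) (IP_int q)

lemma IP_Cmul (c : ℝ) (p : Polynomial ℝ) : IP (C c * p) = c * IP p := by
  unfold IP
  simp only [eval_mul, eval_C]
  exact integral_const_mul c _

lemma IP_deriv (p : Polynomial ℝ) : IP (derivative p) = p.eval 1 - p.eval (-1) := by
  unfold IP
  exact integral_eq_sub_of_hasDerivAt (fun x _ => p.hasDerivAt x) (IP_int _)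

lemma ortho {n m : ℕ} (h : n ≠ m) : IP (LP n * LP m) = 0 := by
  have hW : derivative ((X^2-1) * derivative (LP n) * LP m - (X^2-1) * derivative (LP m) * LP n)
      = C ((n:ℝ)*((n:ℝ)+1) - (m:ℝ)*((m:ℝ)+1)) * (LP n * LP m) := by
    have o1 := LP_ode n
    have o2 := LP_ode m
    simp only [derivative_sub, derivative_mul] at o1 o2 ⊢
    simp only [map_sub, map_add, map_mul, map_one] at o1 o2 ⊢
    linear_combination LP m * o1 - LP n * o2
  have h2 : ((n:ℝ)*((n:ℝ)+1) - (m:ℝ)*((m:ℝ)+1)) * IP (LP n * LP m) = 0 := by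
    rw [← IP_Cmul, ← hW, IP_deriv]
    simp [eval_sub, eval_mul, eval_pow]
  have hne : ((n:ℝ)*((n:ℝ)+1) - (m:ℝ)*((m:ℝ)+1)) ≠ 0 := by
    rcases h.lt_or_gt with hlt | hlt
    · have h1 : (n:ℝ) < m := by exact_mod_cast hlt
      have h0 : (0:ℝ) ≤ n := n.cast_nonneg
      nlinarith
    · have h1 : (m:ℝ) < n := by exact_mod_cast hlt
      have h0 : (0:ℝ) ≤ m := m.cast_nonneg
      nlinarith
  exact (mul_eq_zero.mp h2).resolve_left hne

lemma dortho : ∀ m n : ℕ, m < n → IP (LP n * derivative (LP m)) = 0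
  | 0, n, _ => by
    show IP (LP n * derivative 1) = 0
    simp [IP]
  | 1, n, h => by
    show IP (LP n * derivative X) = 0
    have h0 := ortho (show n ≠ 0 by omega)
    rw [derivative_X, mul_one]
    simpa [LP] using h0
  | (m+2), n, h => by
    rw [LP_telescope, mul_add, IP_add, dortho m n (by omega)]
    rw [show LP n * (C (2*(m:ℝ)+3) * LP (m+1)) = C (2*(m:ℝ)+3) * (LP n * LP (m+1)) by ring]
    rw [IP_Cmul, ortho (show n ≠ m+1 by omega)]
    ring

lemma dself (m : ℕ) : IP (LP m * derivative (LP m)) = 0 := by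
  have h : C (2:ℝ) * (LP m * derivative (LP m)) = derivative (LP m ^ 2) := by
    rw [derivative_pow]
    push_cast
    ring
  have h2 := IP_Cmul 2 (LP m * derivative (LP m))
  rw [h, IP_deriv] at h2
  simp only [eval_pow, LP_eval_one, LP_eval_negone] at h2
  have h3 : (((-1:ℝ))^m)^2 = 1 := by
    rw [← pow_mul, mul_comm, pow_mul]
    norm_num
  rw [h3] at h2
  linarith

theorem stmt2 (j n : ℕ) (hj : 2 ≤ j) (hn : j - 1 < n) :
    ∫ z in (-1:ℝ)..1,
      (deriv (legendre n) z + deriv (legendre (n - 1)) z) *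
        (legendre (j - 1) z - legendre (j - 2) z) = 0 := by
  obtain ⟨k, rfl⟩ : ∃ k, j = k + 2 := ⟨j - 2, by omega⟩
  obtain ⟨m, rfl⟩ : ∃ m, n = m + 2 := ⟨n - 2, by omega⟩
  have hkm : k ≤ m := by omega
  rw [show m + 2 - 1 = m + 1 from rfl, show k + 2 - 1 = k + 1 from rfl,
    show k + 2 - 2 = k from rfl]
  have hder : ∀ a : ℕ, deriv (legendre a) = fun z => (derivative (LP a)).eval z := by
    intro a
    have ha : legendre a = fun z => (LP a).eval z := funext (legendre_eq a)
    funext x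
    rw [ha, Polynomial.deriv]
  have hfun : (fun z : ℝ => (deriv (legendre (m+2)) z + deriv (legendre (m+1)) z) *
      (legendre (k+1) z - legendre k z)) =
      fun z => (((derivative (LP (m+2)) + derivative (LP (m+1))) * (LP (k+1) - LP k))).eval z := by
    funext z
    simp only [hder, legendre_eq (k+1), legendre_eq k, eval_mul, eval_add, eval_sub]
  show (∫ z in (-1:ℝ)..1, (deriv (legendre (m+2)) z + deriv (legendre (m+1)) z) *
      (legendre (k+1) z - legendre k z)) = 0
  rw [hfun]
  show IP ((derivative (LP (m+2)) + derivative (LP (m+1))) * (LP (k+1) - LP k)) = 0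
  rw [show derivative (LP (m+2)) + derivative (LP (m+1)) =
    derivative (LP (m+2) + LP (m+1)) from (derivative_add).symm]
  have key : derivative (LP (m+2) + LP (m+1)) * (LP (k+1) - LP k) =
      derivative ((LP (m+2) + LP (m+1)) * (LP (k+1) - LP k)) -
      (LP (m+2) + LP (m+1)) * derivative (LP (k+1) - LP k) := by
    rw [derivative_mul]; ring
  have hbound : eval 1 ((LP (m+2) + LP (m+1)) * (LP (k+1) - LP k)) -
      eval (-1) ((LP (m+2) + LP (m+1)) * (LP (k+1) - LP k)) = 0 := by
    simp only [eval_mul, eval_add, eval_sub, LP_eval_one, LP_eval_negone, pow_succ]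
    ring
  have hsplit : (LP (m+2) + LP (m+1)) * derivative (LP (k+1) - LP k) =
      (LP (m+2) * derivative (LP (k+1)) + LP (m+1) * derivative (LP (k+1))) -
      (LP (m+2) * derivative (LP k) + LP (m+1) * derivative (LP k)) := by
    rw [derivative_sub]; ring
  have last : IP (LP (m+1) * derivative (LP (k+1))) = 0 := by
    rcases eq_or_lt_of_le (Nat.succ_le_succ hkm) with he | hl
    · obtain rfl : k = m := Nat.succ_injective he
      exact dself _
    · exact dortho (k+1) (m+1) hl
  rw [key, IP_sub, IP_deriv, hsplit, IP_sub, IP_add, IP_add,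
    dortho (k+1) (m+2) (by omega), dortho k (m+2) (by omega), dortho k (m+1) (by omega), last]
  linarith [hbound]
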